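/- Let Z(x₁,x₂,x₃) = e^{x₃}·(x₁, x₂, 1−max(|x₁|,|x₂|)). Then there exists a constant K ≥ 1 such that at every point x = (x₁,x₂,x₃) with max(|x₁|,|x₂|) < 1 and |x₁| ≠ |x₂|, the map Z is differentiable and its derivative satisfies ‖DZ(x)‖³ ≤ K·|det DZ(x)| and |det DZ(x)| ≤ K·ℓ(DZ(x))³. -/

import Mathlib

/-- The Nicks–Sixsmith (pyramid-type) Zorich map on the fundamental beam:
`Z(x₁,x₂,x₃) = e^{x₃}·(x₁, x₂, 1 − max(|x₁|,|x₂|))`. -/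
noncomputable def Zmap (x : EuclideanSpace ℝ (Fin 3)) : EuclideanSpace ℝ (Fin 3) :=
  (WithLp.equiv 2 (Fin 3 → ℝ)).symm
    ![Real.exp (x 2) * x 0, Real.exp (x 2) * x 1,
      Real.exp (x 2) * (1 - max |x 0| |x 1|)]

/-- `ℓ(L) = inf_{|h|=1} |L h|`, the minimal stretching of a linear map `L : ℝ³ → ℝ³`. -/
noncomputable def ell (L : EuclideanSpace ℝ (Fin 3) →L[ℝ] EuclideanSpace ℝ (Fin 3)) : ℝ :=
  ⨅ h : Metric.sphere (0 : EuclideanSpace ℝ (Fin 3)) 1, ‖L (h : EuclideanSpace ℝ (Fin 3))‖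

noncomputable section ZmapAux
set_option maxHeartbeats 1000000
open Real

abbrev E3 := EuclideanSpace ℝ (Fin 3)

def mkE (f0 f1 f2 : E3 →L[ℝ] ℝ) : E3 →L[ℝ] E3 :=
  (PiLp.continuousLinearEquiv 2 ℝ (fun _ : Fin 3 => ℝ)).symm.toContinuousLinearMap.comp
    (ContinuousLinearMap.pi ![f0, f1, f2])

def P (i : Fin 3) : E3 →L[ℝ] ℝ := EuclideanSpace.proj i

lemma P_apply (i : Fin 3) (h : E3) : P i h = h i := rfl

lemma mkE_apply (f0 f1 f2 : E3 →L[ℝ] ℝ) (h : E3) (i : Fin 3) :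
    mkE f0 f1 f2 h i = ![f0, f1, f2] i h := by
  fin_cases i <;> simp [mkE]

lemma mkE_norm (f0 f1 f2 : E3 →L[ℝ] ℝ) (h : E3) :
    ‖mkE f0 f1 f2 h‖ = Real.sqrt ((f0 h)^2 + (f1 h)^2 + (f2 h)^2) := by
  rw [EuclideanSpace.norm_eq]
  congr 1
  rw [Fin.sum_univ_three]
  simp [mkE_apply, sq_abs]

lemma norm_E3 (h : E3) : ‖h‖ = Real.sqrt ((h 0)^2 + (h 1)^2 + (h 2)^2) := by
  rw [EuclideanSpace.norm_eq]
  congr 1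
  rw [Fin.sum_univ_three]
  simp [sq_abs]

lemma mkE_det (e a b x0 x1 m : ℝ) (hm : a*x0 + b*x1 = m) :
    (ContinuousLinearMap.det (mkE (e • (P 0 + x0 • P 2)) (e • (P 1 + x1 • P 2))
      (e • ((-a) • P 0 + (-b) • P 1 + (1-m) • P 2)))) = e^3 := by
  set b3 := (EuclideanSpace.basisFun (Fin 3) ℝ).toBasis
  rw [ContinuousLinearMap.det, ← LinearMap.det_toMatrix b3]
  have : ∀ f0 f1 f2 i j, (LinearMap.toMatrix b3 b3 (mkE f0 f1 f2).toLinearMap) i j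
      = ![f0,f1,f2] i (b3 j) := by
    intro f0 f1 f2 i j
    rw [LinearMap.toMatrix_apply]
    simp [b3, mkE_apply]
  rw [Matrix.det_fin_three]
  simp only [this]
  simp [b3, P, EuclideanSpace.basisFun_apply, EuclideanSpace.single_apply]
  linear_combination (e^3) * hm

lemma quad_upper (a b x0 x1 m h0 h1 h2 : ℝ) (hab1 : a^2+b^2 = 1)
    (hx0 : x0^2 ≤ 1) (hx1 : x1^2 ≤ 1) (hm0 : 0 ≤ m) (hm1 : m ≤ 1) :
    (h0 + x0*h2)^2 + (h1 + x1*h2)^2 + (-(a*h0) - b*h1 + (1-m)*h2)^2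
      ≤ 9 * (h0^2 + h1^2 + h2^2) := by
  nlinarith [sq_nonneg (h0 - x0*h2), sq_nonneg (h1 - x1*h2), sq_nonneg h2, sq_nonneg h0,
    sq_nonneg h1, sq_nonneg (a*h0 + b*h1), sq_nonneg (a*h1 - b*h0),
    sq_nonneg (a*h0 + b*h1 - (1-m)*h2), sq_nonneg (a*h0 + b*h1 + (1-m)*h2),
    mul_nonneg hm0 (sq_nonneg h2), mul_nonneg (mul_nonneg hm0 hm0) (sq_nonneg h2),
    sq_nonneg ((1-m)*h2)]

lemma quad_lower (a b x0 x1 m h0 h1 h2 : ℝ) (hab1 : a^2+b^2 = 1) (hab0 : a*b = 0)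
    (hm : a*x0 + b*x1 = m) (hx0 : x0^2 ≤ 1) (hx1 : x1^2 ≤ 1) (hm0 : 0 ≤ m) (hm1 : m ≤ 1)
    (hh : h0^2 + h1^2 + h2^2 = 1) :
    1 ≤ 16 * ((h0 + x0*h2)^2 + (h1 + x1*h2)^2 + (-(a*h0) - b*h1 + (1-m)*h2)^2) := by
  set u0 := h0 + x0*h2 with hu0
  set u1 := h1 + x1*h2 with hu1
  set u2 := -(a*h0) - b*h1 + (1-m)*h2 with hu2
  have e2 : h2 = a*u0 + b*u1 + u2 := by
    rw [hu0, hu1, hu2]; linear_combination (-h2) * hm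
  have e0 : h0 = u0 - x0*h2 := by rw [hu0]; ring
  have e1 : h1 = u1 - x1*h2 := by rw [hu1]; ring
  have hb : h2^2 ≤ 2*u0^2 + 2*u1^2 + 2*u2^2 := by
    rw [e2]
    nlinarith [sq_nonneg (a*u1 - b*u0), sq_nonneg (a*u0 + b*u1 - u2), sq_nonneg (a*u0+b*u1+u2)]
  have hh' : (u0 - x0*h2)^2 + (u1 - x1*h2)^2 + h2^2 = 1 := by
    rw [← e0, ← e1]; exact hh
  nlinarith [hh', hb, sq_nonneg (u0 + x0*h2), sq_nonneg (u1 + x1*h2),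
    mul_le_mul_of_nonneg_right hx0 (sq_nonneg h2), mul_le_mul_of_nonneg_right hx1 (sq_nonneg h2)]

lemma key (x : E3) (a b : ℝ) (hab1 : a^2 + b^2 = 1) (hab0 : a*b = 0)
    (hm : a * x 0 + b * x 1 = max |x 0| |x 1|) (hmax : max |x 0| |x 1| < 1)
    (hev : ∀ᶠ y in nhds x, a * y 0 + b * y 1 = max |y 0| |y 1|) :
    DifferentiableAt ℝ Zmap x ∧
      ‖fderiv ℝ Zmap x‖ ^ 3 ≤ 64 * |(fderiv ℝ Zmap x).det| ∧
      |(fderiv ℝ Zmap x).det| ≤ 64 * ell (fderiv ℝ Zmap x) ^ 3 := by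
  set m := max |x 0| |x 1| with hmdef
  set e := Real.exp (x 2) with hedef
  have he : 0 < e := Real.exp_pos _
  set L := mkE (e • (P 0 + (x 0) • P 2)) (e • (P 1 + (x 1) • P 2))
      (e • ((-a) • P 0 + (-b) • P 1 + (1 - m) • P 2)) with hLdef
  -- derivative of the smooth local model
  have hF : HasFDerivAt (fun y : E3 => (WithLp.equiv 2 (Fin 3 → ℝ)).symm
        ![exp (y 2) * y 0, exp (y 2) * y 1, exp (y 2) * (1 - (a * y 0 + b * y 1))]) L x := by
    rw [hLdef, show (1 - m) = (1 - (a * x 0 + b * x 1)) by rw [hm]]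
    have hproj : ∀ i : Fin 3, HasFDerivAt (fun y : E3 => y i) (P i) x := fun i => (P i).hasFDerivAt
    have hexp : HasFDerivAt (fun y : E3 => exp (y 2)) (exp (x 2) • P 2) x := by
      exact (Real.hasDerivAt_exp (x 2)).comp_hasFDerivAt x (hproj 2)
    have h0 : HasFDerivAt (fun y : E3 => exp (y 2) * y 0)
        (exp (x 2) • (P 0 + (x 0) • P 2)) x := by
      have := hexp.mul (hproj 0)
      refine this.congr_fderiv ?_
      ext h; simp [P]; ring
    have h1 : HasFDerivAt (fun y : E3 => exp (y 2) * y 1)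
        (exp (x 2) • (P 1 + (x 1) • P 2)) x := by
      have := hexp.mul (hproj 1)
      refine this.congr_fderiv ?_
      ext h; simp [P]; ring
    have h2 : HasFDerivAt (fun y : E3 => exp (y 2) * (1 - (a * y 0 + b * y 1)))
        (exp (x 2) • ((-a) • P 0 + (-b) • P 1 + (1 - (a * x 0 + b * x 1)) • P 2)) x := by
      have hlin : HasFDerivAt (fun y : E3 => 1 - (a * y 0 + b * y 1))
          ((-a) • P 0 + (-b) • P 1) x := by
        have := (((hproj 0).const_mul a).add ((hproj 1).const_mul b)).const_sub 1
        refine this.congr_fderiv ?_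
        ext h; simp [P]; ring
      have := hexp.mul hlin
      refine this.congr_fderiv ?_
      ext h; simp [P]; ring
    have hpi : HasFDerivAt (fun (y : E3) (i : Fin 3) => (![fun y : E3 => exp (y 2) * y 0,
        fun y => exp (y 2) * y 1, fun y => exp (y 2) * (1 - (a * y 0 + b * y 1))] : Fin 3 → E3 → ℝ) i y)
        (ContinuousLinearMap.pi ![exp (x 2) • (P 0 + (x 0) • P 2), exp (x 2) • (P 1 + (x 1) • P 2),
          exp (x 2) • ((-a) • P 0 + (-b) • P 1 + (1 - (a * x 0 + b * x 1)) • P 2)]) x := by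
      apply hasFDerivAt_pi''
      intro i
      fin_cases i
      · exact h0
      · exact h1
      · exact h2
    have H := ((PiLp.continuousLinearEquiv 2 ℝ (fun _ : Fin 3 => ℝ)).symm.toContinuousLinearMap.hasFDerivAt).comp x hpi
    have hfun : (⇑((PiLp.continuousLinearEquiv 2 ℝ (fun _ : Fin 3 => ℝ)).symm.toContinuousLinearMap) ∘
        fun (y : E3) (i : Fin 3) => (![fun y : E3 => exp (y 2) * y 0,
        fun y => exp (y 2) * y 1, fun y => exp (y 2) * (1 - (a * y 0 + b * y 1))] : Fin 3 → E3 → ℝ) i y)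
        = (fun y : E3 => (WithLp.equiv 2 (Fin 3 → ℝ)).symm
          ![exp (y 2) * y 0, exp (y 2) * y 1, exp (y 2) * (1 - (a * y 0 + b * y 1))]) := by
      funext y
      have hv : (fun i : Fin 3 => (![fun y : E3 => exp (y 2) * y 0,
          fun y => exp (y 2) * y 1, fun y => exp (y 2) * (1 - (a * y 0 + b * y 1))] : Fin 3 → E3 → ℝ) i y)
          = ![exp (y 2) * y 0, exp (y 2) * y 1, exp (y 2) * (1 - (a * y 0 + b * y 1))] := by
        funext i; fin_cases i <;> rfl
      show (PiLp.continuousLinearEquiv 2 ℝ (fun _ : Fin 3 => ℝ)).symm.toContinuousLinearMap (fun i : Fin 3 => _) = _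
      rw [show ((fun i : Fin 3 => (![fun y : E3 => exp (y 2) * y 0,
          fun y => exp (y 2) * y 1, fun y => exp (y 2) * (1 - (a * y 0 + b * y 1))] : Fin 3 → E3 → ℝ) i y)) = _ from hv]
      rfl
    rw [hfun] at H
    exact H
  -- Zmap agrees with the model near x
  have hZF : Zmap =ᶠ[nhds x] (fun y : E3 => (WithLp.equiv 2 (Fin 3 → ℝ)).symm
        ![exp (y 2) * y 0, exp (y 2) * y 1, exp (y 2) * (1 - (a * y 0 + b * y 1))]) := by
    filter_upwards [hev] with y hy
    rw [Zmap, hy]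
  have hZ : HasFDerivAt Zmap L x := hF.congr_of_eventuallyEq hZF
  have hfd : fderiv ℝ Zmap x = L := hZ.fderiv
  -- determinant
  have hdet : (L.det : ℝ) = e^3 := mkE_det e a b (x 0) (x 1) m hm
  -- bounds data
  have hm0 : (0:ℝ) ≤ m := le_trans (abs_nonneg _) (le_max_left _ _)
  have hm1 : m ≤ 1 := hmax.le
  have hx0 : (x 0)^2 ≤ 1 := by
    have : |x 0| ≤ 1 := le_trans (le_max_left _ _) hm1
    nlinarith [abs_nonneg (x 0), sq_abs (x 0)]
  have hx1 : (x 1)^2 ≤ 1 := by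
    have : |x 1| ≤ 1 := le_trans (le_max_right _ _) hm1
    nlinarith [abs_nonneg (x 1), sq_abs (x 1)]
  -- component formulas
  have hcomp : ∀ h : E3, ‖L h‖ = Real.sqrt ((e * (h 0 + x 0 * h 2))^2
      + (e * (h 1 + x 1 * h 2))^2 + (e * (-(a * h 0) - b * h 1 + (1-m) * h 2))^2) := by
    intro h
    rw [hLdef, mkE_norm]
    have c0 : (e • (P 0 + (x 0) • P 2)) h = e * (h 0 + x 0 * h 2) := by simp [P_apply]; ring
    have c1 : (e • (P 1 + (x 1) • P 2)) h = e * (h 1 + x 1 * h 2) := by simp [P_apply]; ring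
    have c2 : (e • ((-a) • P 0 + (-b) • P 1 + (1 - m) • P 2)) h
        = e * (-(a * h 0) - b * h 1 + (1-m) * h 2) := by simp [P_apply]; ring
    rw [c0, c1, c2]
  -- operator norm bound
  have hnorm : ‖L‖ ≤ 3 * e := by
    apply ContinuousLinearMap.opNorm_le_bound _ (by positivity)
    intro h
    rw [hcomp h, norm_E3 h]
    rw [show 3 * e * Real.sqrt ((h 0)^2 + (h 1)^2 + (h 2)^2)
        = Real.sqrt ((3*e)^2 * ((h 0)^2 + (h 1)^2 + (h 2)^2)) by
      rw [Real.sqrt_mul (by positivity), Real.sqrt_sq (by positivity)]]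
    apply Real.sqrt_le_sqrt
    have := quad_upper a b (x 0) (x 1) m (h 0) (h 1) (h 2) hab1 hx0 hx1 hm0 hm1
    nlinarith [sq_nonneg e, this, Real.exp_pos (x 2)]
  -- ell lower bound
  have hell : e / 4 ≤ ell L := by
    have hne : Nonempty (Metric.sphere (0 : E3) 1) :=
      ((NormedSpace.sphere_nonempty (x := (0:E3)) (r := 1)).mpr zero_le_one).to_subtype
    apply le_ciInf
    rintro ⟨h, hh⟩
    have hh1 : ‖h‖ = 1 := by simpa using hh
    have hsq : (h 0)^2 + (h 1)^2 + (h 2)^2 = 1 := by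
      have := norm_E3 h
      rw [hh1] at this
      have h2 := congrArg (· ^ 2) this
      simp at h2
      rw [Real.sq_sqrt (by positivity)] at h2
      linarith
    show e / 4 ≤ ‖L h‖
    rw [hcomp h]
    rw [show e / 4 = Real.sqrt ((e/4)^2) by rw [Real.sqrt_sq (by positivity)]]
    apply Real.sqrt_le_sqrt
    have := quad_lower a b (x 0) (x 1) m (h 0) (h 1) (h 2) hab1 hab0 hm hx0 hx1 hm0 hm1 hsq
    nlinarith [sq_nonneg e, Real.exp_pos (x 2)]
  refine ⟨hZ.differentiableAt, ?_, ?_⟩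
  · rw [hfd, hdet, abs_of_pos (by positivity)]
    calc ‖L‖^3 ≤ (3*e)^3 := by
          apply pow_le_pow_left₀ (norm_nonneg _) hnorm
      _ ≤ 64 * e^3 := by nlinarith [pow_pos he 3]
  · rw [hfd, hdet, abs_of_pos (by positivity)]
    calc e^3 = 64 * (e/4)^3 := by ring
      _ ≤ 64 * ell L ^ 3 := by
          have : (e/4)^3 ≤ ell L ^3 := pow_le_pow_left₀ (by positivity) hell 3
          linarith

end ZmapAux

set_option maxHeartbeats 1000000

/-- There is `K ≥ 1` such that at every point of the open fundamental beam off the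
diagonals, `Z` is differentiable and satisfies the quasiregularity dilatation
inequalities `‖DZ(x)‖³ ≤ K·|det DZ(x)|` and `|det DZ(x)| ≤ K·ℓ(DZ(x))³`. -/
theorem Zmap_dilatation : ∃ K : ℝ, 1 ≤ K ∧
    ∀ x : EuclideanSpace ℝ (Fin 3), max |x 0| |x 1| < 1 → |x 0| ≠ |x 1| →
      DifferentiableAt ℝ Zmap x ∧
      ‖fderiv ℝ Zmap x‖ ^ 3 ≤ K * |(fderiv ℝ Zmap x).det| ∧
      |(fderiv ℝ Zmap x).det| ≤ K * ell (fderiv ℝ Zmap x) ^ 3 := by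
  refine ⟨64, by norm_num, fun x hmax hne => ?_⟩
  have hc : ∀ i : Fin 3, Continuous (fun y : E3 => y i) := fun i => (P i).continuous
  rcases hne.lt_or_gt with hlt | hlt
  · -- |x 0| < |x 1| : m = |x 1|, a = 0, b = sign (x 1)
    set b := if 0 < x 1 then (1:ℝ) else -1 with hbdef
    have hb : |b| = 1 := by rw [hbdef]; split <;> simp
    have hbx : b * x 1 = |x 1| := by
      rw [hbdef]
      rcases lt_trichotomy (x 1) 0 with h | h | h
      · rw [if_neg (by linarith), abs_of_neg h]; ring
      · simp [h]
      · rw [if_pos h, abs_of_pos h]; ring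
    have hm : (0:ℝ) * x 0 + b * x 1 = max |x 0| |x 1| := by
      rw [max_eq_right hlt.le, hbx]; ring
    have hev : ∀ᶠ y in nhds x, (0:ℝ) * y 0 + b * y 1 = max |y 0| |y 1| := by
      have h1 : ∀ᶠ y in nhds x, |y 0| < |y 1| :=
        ((hc 0).abs.continuousAt (x := x)).eventually_lt ((hc 1).abs.continuousAt) hlt
      have h2 : ∀ᶠ y in nhds x, 0 < b * y 1 := by
        have hca : ContinuousAt (fun y : E3 => b * y 1) x := (continuous_const.mul (hc 1)).continuousAt
        have hpos : 0 < b * x 1 := by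
          rw [hbx]; exact lt_of_le_of_lt (abs_nonneg _) hlt
        exact hca.eventually (eventually_gt_nhds hpos)
      filter_upwards [h1, h2] with y hy1 hy2
      rw [max_eq_right hy1.le]
      have : |b * y 1| = b * y 1 := abs_of_pos hy2
      rw [← this, abs_mul, hb, one_mul]
      ring
    have hb2 : b^2 = 1 := by rw [hbdef]; split <;> norm_num
    exact key x 0 b (by rw [hb2]; norm_num) (by ring) hm hmax hev
  · -- |x 1| < |x 0|
    set a := if 0 < x 0 then (1:ℝ) else -1 with hadef
    have ha : |a| = 1 := by rw [hadef]; split <;> simp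
    have hax : a * x 0 = |x 0| := by
      rw [hadef]
      rcases lt_trichotomy (x 0) 0 with h | h | h
      · rw [if_neg (by linarith), abs_of_neg h]; ring
      · simp [h]
      · rw [if_pos h, abs_of_pos h]; ring
    have hm : a * x 0 + (0:ℝ) * x 1 = max |x 0| |x 1| := by
      rw [max_eq_left hlt.le, hax]; ring
    have hev : ∀ᶠ y in nhds x, a * y 0 + (0:ℝ) * y 1 = max |y 0| |y 1| := by
      have h1 : ∀ᶠ y in nhds x, |y 1| < |y 0| :=
        ((hc 1).abs.continuousAt (x := x)).eventually_lt ((hc 0).abs.continuousAt) hlt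
      have h2 : ∀ᶠ y in nhds x, 0 < a * y 0 := by
        have hca : ContinuousAt (fun y : E3 => a * y 0) x := (continuous_const.mul (hc 0)).continuousAt
        have hpos : 0 < a * x 0 := by
          rw [hax]; exact lt_of_le_of_lt (abs_nonneg _) hlt
        exact hca.eventually (eventually_gt_nhds hpos)
      filter_upwards [h1, h2] with y hy1 hy2
      rw [max_eq_left hy1.le]
      have : |a * y 0| = a * y 0 := abs_of_pos hy2
      rw [← this, abs_mul, ha, one_mul]
      ring
    have ha2 : a^2 = 1 := by rw [hadef]; split <;> norm_num
    exact key x a 0 (by rw [ha2]; norm_num) (by ring) hm hmax hev
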